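/- arXiv:1410.7316 — 2 statements merged into one kernel-verified Lean document; each statement's English description precedes it below -/
import Mathlib

section
/- Let t > 0 and let f : ℝ → ℝ be eight times continuously differentiable with bounded eighth derivative. Set b_1(t) = (t²/2) f''(t), b_2(t) = (t⁴/8) f⁽⁴⁾(t) + (t³/3) f⁽³⁾(t), and b_3(t) = (t⁶/48) f⁽⁶⁾(t) + (t⁵/6) f⁽⁵⁾(t) + (t⁴/4) f⁽⁴⁾(t). Then lim_{n→∞} n⁴ · ( ∫ f(x) dΓ(n, n/t)(x) − f(t) − b_1(t)/n − b_2(t)/n² − b_3(t)/n³ ) = (t⁸/384) f⁽⁸⁾(t) + (t⁷/24) f⁽⁷⁾(t) + (13 t⁶/72) f⁽⁶⁾(t) + (t⁵/5) f⁽⁵⁾(t). -/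
open MeasureTheory ProbabilityTheory Filter
namespace GammaFourth

open Real Set


lemma Gamma_add_nat {a : ℝ} (ha : 0 < a) (k : ℕ) :
    Real.Gamma (a + k) = (∏ i ∈ Finset.range k, (a + i)) * Real.Gamma a := by
  induction k with
  | zero => simp
  | succ m ih =>
    have h1 : a + ((m : ℕ) + 1 : ℕ) = (a + m) + 1 := by push_cast; ring
    rw [h1, Real.Gamma_add_one (by positivity), ih, Finset.prod_range_succ]
    push_cast; ring

lemma integral_gamma_eq {a r : ℝ} (ha : 0 < a) (hr : 0 < r) (g : ℝ → ℝ) :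
    ∫ x, g x ∂(gammaMeasure a r) = ∫ x in Set.Ioi (0:ℝ), gammaPDFReal a r x * g x := by
  have hm : Measurable fun x => (gammaPDFReal a r x).toNNReal :=
    (measurable_gammaPDFReal a r).real_toNNReal
  have hpdf : (gammaPDF a r) = fun x => ((gammaPDFReal a r x).toNNReal : ENNReal) := by
    funext x; rw [gammaPDF, ENNReal.ofReal]
  rw [gammaMeasure, hpdf, integral_withDensity_eq_integral_smul hm]
  have h1 : ∀ x, (gammaPDFReal a r x).toNNReal • g x = gammaPDFReal a r x * g x := by
    intro x
    rw [NNReal.smul_def, smul_eq_mul, Real.coe_toNNReal _ (gammaPDFReal_nonneg ha hr x)]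
  simp_rw [h1]
  rw [← integral_indicator measurableSet_Ioi]
  apply integral_congr_ae
  have h0 : ∀ᵐ x : ℝ, x ∉ ({0} : Set ℝ) :=
    (MeasureTheory.measure_eq_zero_iff_ae_notMem).mp Real.volume_singleton
  filter_upwards [h0] with x hx
  rcases lt_trichotomy x 0 with h | h | h
  · have : gammaPDFReal a r x = 0 := by
      simp [gammaPDFReal, not_le.mpr h]
    rw [this, Set.indicator_of_notMem (by simpa using h.le.not_gt : x ∉ Set.Ioi (0:ℝ))]
    simp
  · exact absurd h (by simpa using hx)
  · rw [Set.indicator_of_mem (by simpa using h)]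

lemma integrable_gamma_iff {a r : ℝ} (ha : 0 < a) (hr : 0 < r) (g : ℝ → ℝ) :
    Integrable g (gammaMeasure a r) ↔
      IntegrableOn (fun x => gammaPDFReal a r x * g x) (Set.Ioi (0:ℝ)) := by
  have hm : Measurable fun x => (gammaPDFReal a r x).toNNReal :=
    (measurable_gammaPDFReal a r).real_toNNReal
  have hpdf : (gammaPDF a r) = fun x => ((gammaPDFReal a r x).toNNReal : ENNReal) := by
    funext x; rw [gammaPDF, ENNReal.ofReal]
  rw [gammaMeasure, hpdf, integrable_withDensity_iff_integrable_smul hm]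
  have h1 : ∀ x, (gammaPDFReal a r x).toNNReal • g x = gammaPDFReal a r x * g x := by
    intro x
    rw [NNReal.smul_def, smul_eq_mul, Real.coe_toNNReal _ (gammaPDFReal_nonneg ha hr x)]
  simp_rw [h1]
  rw [← integrable_indicator_iff measurableSet_Ioi]
  apply integrable_congr
  have h0 : ∀ᵐ x : ℝ, x ∉ ({0} : Set ℝ) :=
    (MeasureTheory.measure_eq_zero_iff_ae_notMem).mp Real.volume_singleton
  filter_upwards [h0] with x hx
  rcases lt_trichotomy x 0 with h | h | h
  · have : gammaPDFReal a r x = 0 := by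
      simp [gammaPDFReal, not_le.mpr h]
    rw [this, Set.indicator_of_notMem (by simpa using h.le.not_gt : x ∉ Set.Ioi (0:ℝ))]
    simp
  · exact absurd h (by simpa using hx)
  · rw [Set.indicator_of_mem (by simpa using h)]


lemma integrableOn_aux {s r : ℝ} (hs : 0 < s) (hr : 0 < r) :
    IntegrableOn (fun x : ℝ => x ^ (s - 1) * Real.exp (-(r * x))) (Set.Ioi (0:ℝ)) := by
  have h := integrableOn_rpow_mul_exp_neg_mul_rpow (p := 1) (s := s - 1) (b := r)
    (by linarith) one_pos hr
  apply h.congr_fun ?_ measurableSet_Ioi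
  intro x hx
  simp only [Real.rpow_one]
  ring_nf

lemma eqOn_pdf_pow {a r : ℝ} (ha : 0 < a) (hr : 0 < r) (k : ℕ) :
    ∀ x ∈ Set.Ioi (0:ℝ), gammaPDFReal a r x * x ^ k
      = r ^ a / Real.Gamma a * (x ^ (a + k - 1) * Real.exp (-(r * x))) := by
  intro x hx
  have hx0 : (0:ℝ) < x := hx
  rw [gammaPDFReal, if_pos hx0.le]
  have h1 : (x : ℝ) ^ k = x ^ ((k : ℕ) : ℝ) := (Real.rpow_natCast x k).symm
  have h2 : x ^ (a - 1) * x ^ ((k : ℕ) : ℝ) = x ^ (a + k - 1) := by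
    rw [← Real.rpow_add hx0]; ring_nf
  calc r ^ a / Real.Gamma a * x ^ (a - 1) * Real.exp (-(r * x)) * x ^ k
      = r ^ a / Real.Gamma a * (x ^ (a - 1) * x ^ ((k:ℕ):ℝ) * Real.exp (-(r * x))) := by
        rw [← h1]; ring
    _ = r ^ a / Real.Gamma a * (x ^ (a + k - 1) * Real.exp (-(r * x))) := by rw [h2]

lemma integrable_gamma_pow {a r : ℝ} (ha : 0 < a) (hr : 0 < r) (k : ℕ) :
    Integrable (fun x => x ^ k) (gammaMeasure a r) := by
  rw [integrable_gamma_iff ha hr]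
  have h := (integrableOn_aux (s := a + k) (by positivity) hr).const_mul
    (r ^ a / Real.Gamma a)
  exact MeasureTheory.IntegrableOn.congr_fun h
    (fun x hx => (eqOn_pdf_pow ha hr k x hx).symm) measurableSet_Ioi

lemma integral_gamma_pow {a r : ℝ} (ha : 0 < a) (hr : 0 < r) (k : ℕ) :
    ∫ x, x ^ k ∂(gammaMeasure a r) = (∏ i ∈ Finset.range k, (a + i)) / r ^ k := by
  rw [integral_gamma_eq ha hr, setIntegral_congr_fun measurableSet_Ioi (eqOn_pdf_pow ha hr k)]
  rw [MeasureTheory.integral_const_mul]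
  have h3 : a + k - 1 = (a + k) - 1 := by ring
  rw [h3, integral_rpow_mul_exp_neg_mul_Ioi (by positivity : (0:ℝ) < a + k) hr]
  rw [Gamma_add_nat ha k]
  have h4 : ((1:ℝ)/r) ^ (a + (k:ℝ)) = (r ^ a)⁻¹ * (r ^ k)⁻¹ := by
    rw [Real.rpow_add (by positivity), one_div, Real.inv_rpow hr.le, Real.inv_rpow hr.le,
      Real.rpow_natCast]
  rw [h4]
  have h5 : Real.Gamma a ≠ 0 := (Real.Gamma_pos_of_pos ha).ne'
  have h6 : r ^ a ≠ 0 := (Real.rpow_pos_of_pos hr a).ne'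
  have h7 : (r:ℝ) ^ k ≠ 0 := by positivity
  field_simp

lemma pow_sub_eq_sum (t : ℝ) (k : ℕ) (x : ℝ) :
    (x - t) ^ k = ∑ m ∈ Finset.range (k + 1),
      ((-1 : ℝ) ^ (m + k) * t ^ (k - m) * (k.choose m : ℝ)) * x ^ m := by
  rw [sub_pow]
  exact Finset.sum_congr rfl fun m _ => by ring

lemma integrable_gamma_pow_sub {a r : ℝ} (ha : 0 < a) (hr : 0 < r) (t : ℝ) (k : ℕ) :
    Integrable (fun x => (x - t) ^ k) (gammaMeasure a r) := by
  have h : (fun x => (x - t) ^ k) = fun x => ∑ m ∈ Finset.range (k + 1),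
      ((-1 : ℝ) ^ (m + k) * t ^ (k - m) * (k.choose m : ℝ)) * x ^ m :=
    funext fun x => pow_sub_eq_sum t k x
  rw [h]
  exact integrable_finset_sum _ fun m _ => (integrable_gamma_pow ha hr m).const_mul _

lemma integral_gamma_pow_sub {a r : ℝ} (ha : 0 < a) (hr : 0 < r) (t : ℝ) (k : ℕ) :
    ∫ x, (x - t) ^ k ∂(gammaMeasure a r) = ∑ m ∈ Finset.range (k + 1),
      ((-1 : ℝ) ^ (m + k) * t ^ (k - m) * (k.choose m : ℝ)) *
        ((∏ i ∈ Finset.range m, (a + i)) / r ^ m) := by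
  have h : (fun x => (x - t) ^ k) = fun x => ∑ m ∈ Finset.range (k + 1),
      ((-1 : ℝ) ^ (m + k) * t ^ (k - m) * (k.choose m : ℝ)) * x ^ m :=
    funext fun x => pow_sub_eq_sum t k x
  rw [h, integral_finset_sum _ fun m _ => (integrable_gamma_pow ha hr m).const_mul _]
  exact Finset.sum_congr rfl fun m _ => by
    rw [MeasureTheory.integral_const_mul, integral_gamma_pow ha hr m]

section Closed
variable {n : ℕ} {t : ℝ}


lemma M0_closed (hn : 1 ≤ n) (ht : 0 < t) :
    ∫ x, (x - t) ^ 0 ∂(gammaMeasure n ((n : ℝ) / t)) =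
      t ^ 0 * 1 / (n:ℝ) ^ 0 := by
  have hn0 : (0:ℝ) < n := by exact_mod_cast hn
  rw [integral_gamma_pow_sub hn0 (by positivity) t 0]
  simp only [Finset.sum_range_succ, Finset.prod_range_succ, Finset.sum_range_zero,
    Finset.prod_range_zero]
  norm_num [Nat.choose]

lemma M1_closed (hn : 1 ≤ n) (ht : 0 < t) :
    ∫ x, (x - t) ^ 1 ∂(gammaMeasure n ((n : ℝ) / t)) =
      t ^ 1 * 0 / (n:ℝ) ^ 1 := by
  have hn0 : (0:ℝ) < n := by exact_mod_cast hn
  rw [integral_gamma_pow_sub hn0 (by positivity) t 1]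
  simp only [Finset.sum_range_succ, Finset.prod_range_succ, Finset.sum_range_zero,
    Finset.prod_range_zero]
  norm_num [Nat.choose]
  field_simp
  ring

lemma M2_closed (hn : 1 ≤ n) (ht : 0 < t) :
    ∫ x, (x - t) ^ 2 ∂(gammaMeasure n ((n : ℝ) / t)) =
      t ^ 2 * 1 * (n:ℝ) / (n:ℝ) ^ 2 := by
  have hn0 : (0:ℝ) < n := by exact_mod_cast hn
  rw [integral_gamma_pow_sub hn0 (by positivity) t 2]
  simp only [Finset.sum_range_succ, Finset.prod_range_succ, Finset.sum_range_zero,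
    Finset.prod_range_zero]
  norm_num [Nat.choose]
  field_simp
  ring

lemma M3_closed (hn : 1 ≤ n) (ht : 0 < t) :
    ∫ x, (x - t) ^ 3 ∂(gammaMeasure n ((n : ℝ) / t)) =
      t ^ 3 * 2 * (n:ℝ) / (n:ℝ) ^ 3 := by
  have hn0 : (0:ℝ) < n := by exact_mod_cast hn
  rw [integral_gamma_pow_sub hn0 (by positivity) t 3]
  simp only [Finset.sum_range_succ, Finset.prod_range_succ, Finset.sum_range_zero,
    Finset.prod_range_zero]
  norm_num [Nat.choose]
  field_simp
  ring

lemma M4_closed (hn : 1 ≤ n) (ht : 0 < t) :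
    ∫ x, (x - t) ^ 4 ∂(gammaMeasure n ((n : ℝ) / t)) =
      t ^ 4 * (3 * (n:ℝ) ^ 2 + 6 * n) / (n:ℝ) ^ 4 := by
  have hn0 : (0:ℝ) < n := by exact_mod_cast hn
  rw [integral_gamma_pow_sub hn0 (by positivity) t 4]
  simp only [Finset.sum_range_succ, Finset.prod_range_succ, Finset.sum_range_zero,
    Finset.prod_range_zero]
  norm_num [Nat.choose]
  field_simp
  ring

lemma M5_closed (hn : 1 ≤ n) (ht : 0 < t) :
    ∫ x, (x - t) ^ 5 ∂(gammaMeasure n ((n : ℝ) / t)) =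
      t ^ 5 * (20 * (n:ℝ) ^ 2 + 24 * n) / (n:ℝ) ^ 5 := by
  have hn0 : (0:ℝ) < n := by exact_mod_cast hn
  rw [integral_gamma_pow_sub hn0 (by positivity) t 5]
  simp only [Finset.sum_range_succ, Finset.prod_range_succ, Finset.sum_range_zero,
    Finset.prod_range_zero]
  norm_num [Nat.choose]
  field_simp
  ring

lemma M6_closed (hn : 1 ≤ n) (ht : 0 < t) :
    ∫ x, (x - t) ^ 6 ∂(gammaMeasure n ((n : ℝ) / t)) =
      t ^ 6 * (15 * (n:ℝ) ^ 3 + 130 * n ^ 2 + 120 * n) / (n:ℝ) ^ 6 := by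
  have hn0 : (0:ℝ) < n := by exact_mod_cast hn
  rw [integral_gamma_pow_sub hn0 (by positivity) t 6]
  simp only [Finset.sum_range_succ, Finset.prod_range_succ, Finset.sum_range_zero,
    Finset.prod_range_zero]
  norm_num [Nat.choose]
  field_simp
  ring

lemma M7_closed (hn : 1 ≤ n) (ht : 0 < t) :
    ∫ x, (x - t) ^ 7 ∂(gammaMeasure n ((n : ℝ) / t)) =
      t ^ 7 * (210 * (n:ℝ) ^ 3 + 924 * n ^ 2 + 720 * n) / (n:ℝ) ^ 7 := by
  have hn0 : (0:ℝ) < n := by exact_mod_cast hn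
  rw [integral_gamma_pow_sub hn0 (by positivity) t 7]
  simp only [Finset.sum_range_succ, Finset.prod_range_succ, Finset.sum_range_zero,
    Finset.prod_range_zero]
  norm_num [Nat.choose]
  field_simp
  ring

lemma M8_closed (hn : 1 ≤ n) (ht : 0 < t) :
    ∫ x, (x - t) ^ 8 ∂(gammaMeasure n ((n : ℝ) / t)) =
      t ^ 8 * (105 * (n:ℝ) ^ 4 + 2380 * n ^ 3 + 7308 * n ^ 2 + 5040 * n) / (n:ℝ) ^ 8 := by
  have hn0 : (0:ℝ) < n := by exact_mod_cast hn
  rw [integral_gamma_pow_sub hn0 (by positivity) t 8]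
  simp only [Finset.sum_range_succ, Finset.prod_range_succ, Finset.sum_range_zero,
    Finset.prod_range_zero]
  norm_num [Nat.choose]
  field_simp
  ring

lemma M10_closed (hn : 1 ≤ n) (ht : 0 < t) :
    ∫ x, (x - t) ^ 10 ∂(gammaMeasure n ((n : ℝ) / t)) =
      t ^ 10 * (945 * (n:ℝ) ^ 5 + 44100 * n ^ 4 + 303660 * n ^ 3 + 623376 * n ^ 2 + 362880 * n) / (n:ℝ) ^ 10 := by
  have hn0 : (0:ℝ) < n := by exact_mod_cast hn
  rw [integral_gamma_pow_sub hn0 (by positivity) t 10]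
  simp only [Finset.sum_range_succ, Finset.prod_range_succ, Finset.sum_range_zero,
    Finset.prod_range_zero]
  norm_num [Nat.choose]
  field_simp
  ring

end Closed


lemma iDW_eq {n : ℕ} {f : ℝ → ℝ} (hf : ContDiff ℝ (n : ℕ∞) f)
    {s : Set ℝ} (hs : UniqueDiffOn ℝ s) {k : ℕ} (hk : k ≤ n) {x : ℝ} (hx : x ∈ s) :
    iteratedDerivWithin k f s x = iteratedDeriv k f x := by
  have h := (contDiff_iff_ftaylorSeries.mp hf).hasFTaylorSeriesUpToOn s
  rw [iteratedDerivWithin_eq_iteratedFDerivWithin, iteratedDeriv_eq_iteratedFDeriv,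
    ← h.eq_iteratedFDerivWithin_of_uniqueDiffOn (by exact_mod_cast hk) hs hx]
  rfl

lemma hf_cast {f : ℝ → ℝ} (hf : ContDiff ℝ 8 f) : ContDiff ℝ ((8:ℕ) : ℕ∞) f := by
  exact_mod_cast hf

lemma taylor_eight {f : ℝ → ℝ} (hf : ContDiff ℝ 8 f) {t x : ℝ} (hx : t < x) :
    ∃ ξ ∈ Set.Ioo t x,
      f x - ∑ k ∈ Finset.range 8, iteratedDeriv k f t * (x - t) ^ k / (k.factorial : ℝ)
        = iteratedDeriv 8 f ξ * (x - t) ^ 8 / 40320 := by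
  have hf8 := hf_cast hf
  have hfd : Differentiable ℝ (iteratedDeriv 7 f) :=
    hf.differentiable_iteratedDeriv 7 (by norm_num)
  have hIcc : UniqueDiffOn ℝ (Set.Icc t x) := uniqueDiffOn_Icc hx
  have hf7 : ContDiffOn ℝ 7 f (Set.Icc t x) := (hf.of_le (by norm_num)).contDiffOn
  have hf' : DifferentiableOn ℝ (iteratedDerivWithin 7 f (Set.Icc t x)) (Set.Ioo t x) := by
    apply (hfd.differentiableOn).congr
    intro y hy
    exact iDW_eq hf8 hIcc (by norm_num) (Set.Ioo_subset_Icc_self hy)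
  have hf7' : ContDiffOn ℝ 7 f (Set.uIcc t x) := by rw [Set.uIcc_of_le hx.le]; exact hf7
  have hf'' : DifferentiableOn ℝ (iteratedDerivWithin 7 f (Set.uIcc t x)) (Set.uIoo t x) := by
    rw [Set.uIcc_of_le hx.le, Set.uIoo_of_le hx.le]; exact hf'
  obtain ⟨ξ, hξ, h⟩ := taylor_mean_remainder_lagrange (n := 7) hx.ne hf7' hf''
  rw [Set.uIcc_of_le hx.le] at h
  rw [Set.uIoo_of_le hx.le] at hξ
  refine ⟨ξ, hξ, ?_⟩
  have h2 : taylorWithinEval f 7 (Set.Icc t x) t x =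
      ∑ k ∈ Finset.range 8, iteratedDeriv k f t * (x - t) ^ k / (k.factorial : ℝ) := by
    rw [taylor_within_apply]
    refine Finset.sum_congr rfl fun k hk => ?_
    rw [iDW_eq hf8 hIcc (by simp at hk; omega) (Set.left_mem_Icc.mpr hx.le)]
    rw [smul_eq_mul]; ring
  have h3 : iteratedDerivWithin 8 f (Set.Icc t x) ξ = iteratedDeriv 8 f ξ :=
    iDW_eq hf8 hIcc le_rfl (Set.Ioo_subset_Icc_self hξ)
  rw [h2] at h
  rw [h, h3]
  norm_num [Nat.factorial]

lemma taylor_rem {f : ℝ → ℝ} (hf : ContDiff ℝ 8 f) (t : ℝ) {x : ℝ} (hx : x ≠ t) :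
    ∃ ξ : ℝ, |ξ - t| < |x - t| ∧
      f x - ∑ k ∈ Finset.range 9, iteratedDeriv k f t * (x - t) ^ k / (k.factorial : ℝ)
        = (iteratedDeriv 8 f ξ - iteratedDeriv 8 f t) * (x - t) ^ 8 / 40320 := by
  have hsplit : ∑ k ∈ Finset.range 9, iteratedDeriv k f t * (x - t) ^ k / (k.factorial : ℝ)
      = (∑ k ∈ Finset.range 8, iteratedDeriv k f t * (x - t) ^ k / (k.factorial : ℝ))
        + iteratedDeriv 8 f t * (x - t) ^ 8 / 40320 := by
    rw [Finset.sum_range_succ]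
    norm_num [Nat.factorial]
  rcases lt_or_gt_of_ne hx with hlt | hgt
  · -- x < t : use g = f ∘ neg around -t
    set g : ℝ → ℝ := fun y => f (-y) with hg
    have hgc : ContDiff ℝ 8 g := hf.comp contDiff_neg
    obtain ⟨ζ, hζ, h⟩ := taylor_eight hgc (show -t < -x by linarith)
    refine ⟨-ζ, ?_, ?_⟩
    · rw [abs_sub_lt_iff]
      obtain ⟨h1, h2⟩ := hζ
      constructor <;> [skip; skip] <;> rw [abs_of_neg (by linarith : x - t < 0)] <;> linarith
    · have hgx : g (-x) = f x := by simp [hg]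
      have hgd : ∀ k : ℕ, iteratedDeriv k g (-t) = (-1:ℝ) ^ k * iteratedDeriv k f t := by
        intro k
        rw [hg, iteratedDeriv_comp_neg k f (-t), neg_neg, smul_eq_mul]
      have hgd8 : iteratedDeriv 8 g ζ = iteratedDeriv 8 f (-ζ) := by
        rw [hg, iteratedDeriv_comp_neg 8 f ζ]
        norm_num
      rw [hgx, hgd8] at h
      have hterm : ∀ k : ℕ, iteratedDeriv k g (-t) * (-x - -t) ^ k / (k.factorial : ℝ)
          = iteratedDeriv k f t * (x - t) ^ k / (k.factorial : ℝ) := by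
        intro k
        rw [hgd k]
        have : (-1:ℝ) ^ k * (-x - -t) ^ k = (x - t) ^ k := by
          rw [← mul_pow]; congr 1; ring
        field_simp
        linear_combination iteratedDeriv k f t * this
      have hpow : (-x - -t) ^ 8 = (x - t) ^ 8 := by ring
      rw [hsplit]
      simp_rw [hterm, hpow] at h
      linarith [h]
  · obtain ⟨ξ, hξ, h⟩ := taylor_eight hf hgt
    refine ⟨ξ, ?_, ?_⟩
    · rw [abs_sub_lt_iff]
      obtain ⟨h1, h2⟩ := hξ
      constructor <;> rw [abs_of_pos (by linarith : (0:ℝ) < x - t)] <;> linarith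
    · rw [hsplit]; linarith [h]



noncomputable def T9 (f : ℝ → ℝ) (t x : ℝ) : ℝ :=
  ∑ k ∈ Finset.range 9, iteratedDeriv k f t * (x - t) ^ k / (k.factorial : ℝ)

lemma rem_self (f : ℝ → ℝ) (t : ℝ) : f t - T9 f t t = 0 := by
  rw [T9, Finset.sum_range_succ']
  simp [Nat.factorial]

lemma rem_global {f : ℝ → ℝ} (hf : ContDiff ℝ 8 f) {M : ℝ}
    (hM : ∀ x, |iteratedDeriv 8 f x| ≤ M) (t x : ℝ) :
    |f x - T9 f t x| ≤ 2 * M / 40320 * (x - t) ^ 8 := by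
  have hM0 : 0 ≤ M := le_trans (abs_nonneg _) (hM t)
  rcases eq_or_ne x t with rfl | hx
  · rw [rem_self]; simp
  · obtain ⟨ξ, _, h⟩ := taylor_rem hf t hx
    rw [T9, h, abs_div, abs_mul]
    rw [show |(40320:ℝ)| = 40320 by norm_num, abs_pow, ← abs_pow, abs_of_nonneg
      (by positivity : (0:ℝ) ≤ (x-t)^8)]
    rw [div_mul_eq_mul_div, div_le_div_iff₀ (by norm_num) (by norm_num)]
    have : |iteratedDeriv 8 f ξ - iteratedDeriv 8 f t| ≤ 2 * M := by
      calc |iteratedDeriv 8 f ξ - iteratedDeriv 8 f t|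
          ≤ |iteratedDeriv 8 f ξ| + |iteratedDeriv 8 f t| := abs_sub _ _
        _ ≤ 2 * M := by linarith [hM ξ, hM t]
    nlinarith [pow_nonneg (abs_nonneg (x - t)) 8, abs_pow (x-t) 8,
      pow_nonneg (sq_nonneg (x-t)) 4]

lemma rem_local {f : ℝ → ℝ} (hf : ContDiff ℝ 8 f) (t : ℝ) {ε : ℝ} (hε : 0 < ε) :
    ∃ δ > 0, ∀ x, |x - t| ≤ δ → |f x - T9 f t x| ≤ ε * (x - t) ^ 8 := by
  have hc : Continuous (iteratedDeriv 8 f) := hf.continuous_iteratedDeriv 8 le_rfl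
  have hca : ContinuousAt (iteratedDeriv 8 f) t := hc.continuousAt
  rw [Metric.continuousAt_iff] at hca
  obtain ⟨δ₀, hδ₀, hδ⟩ := hca (40320 * ε) (by positivity)
  refine ⟨δ₀ / 2, by positivity, fun x hx => ?_⟩
  rcases eq_or_ne x t with rfl | hxt
  · rw [rem_self]; simp
  · obtain ⟨ξ, hξ, h⟩ := taylor_rem hf t hxt
    have hd : dist ξ t < δ₀ := by
      rw [Real.dist_eq]; calc |ξ - t| < |x - t| := hξ
        _ ≤ δ₀/2 := hx
        _ < δ₀ := by linarith
    have hb : |iteratedDeriv 8 f ξ - iteratedDeriv 8 f t| ≤ 40320 * ε := by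
      have := hδ hd; rw [Real.dist_eq] at this; linarith
    rw [T9, h, abs_div, abs_mul]
    rw [show |(40320:ℝ)| = 40320 by norm_num, abs_of_nonneg
      (by positivity : (0:ℝ) ≤ (x-t)^8)]
    rw [div_le_iff₀ (by norm_num)]
    nlinarith [pow_nonneg (sq_nonneg (x-t)) 4, sq_nonneg (x-t),
      abs_nonneg (iteratedDeriv 8 f ξ - iteratedDeriv 8 f t),
      pow_nonneg (abs_nonneg (x-t)) 8]



/-- |y|^k ≤ 1 + y^8 for k ≤ 8 -/
lemma abs_pow_le (y : ℝ) {k : ℕ} (hk : k ≤ 8) : |y| ^ k ≤ 1 + y ^ 8 := by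
  have h8 : y ^ 8 = |y| ^ 8 := by
    rw [← abs_pow]; exact (abs_of_nonneg (by positivity)).symm
  rcases le_or_gt (|y|) 1 with h | h
  · have := pow_le_one₀ (abs_nonneg y) h (n := k)
    nlinarith [pow_nonneg (abs_nonneg y) 8]
  · have := pow_le_pow_right₀ h.le hk
    nlinarith

section Assembly
variable {f : ℝ → ℝ} {t : ℝ} {n : ℕ}

lemma T9_eq (f : ℝ → ℝ) (t : ℝ) : T9 f t = fun x =>
    ∑ k ∈ Finset.range 9, (iteratedDeriv k f t / (k.factorial : ℝ)) * (x - t) ^ k := by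
  funext x; rw [T9]; exact Finset.sum_congr rfl fun k _ => by ring

lemma integrable_T9 (hn : 1 ≤ n) (ht : 0 < t) (f : ℝ → ℝ) :
    Integrable (T9 f t) (gammaMeasure n ((n : ℝ) / t)) := by
  have hn0 : (0:ℝ) < n := by exact_mod_cast hn
  rw [T9_eq]
  exact integrable_finset_sum _ fun k _ =>
    (integrable_gamma_pow_sub hn0 (by positivity) t k).const_mul _

lemma integral_T9 (hn : 1 ≤ n) (ht : 0 < t) (f : ℝ → ℝ) :
    ∫ x, T9 f t x ∂(gammaMeasure n ((n : ℝ) / t)) =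
      ∑ k ∈ Finset.range 9, (iteratedDeriv k f t / (k.factorial : ℝ)) *
        ∫ x, (x - t) ^ k ∂(gammaMeasure n ((n : ℝ) / t)) := by
  have hn0 : (0:ℝ) < n := by exact_mod_cast hn
  rw [T9_eq]
  rw [integral_finset_sum _ fun k _ =>
    (integrable_gamma_pow_sub hn0 (by positivity) t k).const_mul _]
  exact Finset.sum_congr rfl fun k _ => MeasureTheory.integral_const_mul _ _

lemma integrable_f (hn : 1 ≤ n) (ht : 0 < t) (hf : ContDiff ℝ 8 f) {M : ℝ}
    (hM : ∀ x, |iteratedDeriv 8 f x| ≤ M) :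
    Integrable f (gammaMeasure n ((n : ℝ) / t)) := by
  have hn0 : (0:ℝ) < n := by exact_mod_cast hn
  haveI : IsProbabilityMeasure (gammaMeasure (n:ℝ) ((n:ℝ)/t)) :=
    isProbabilityMeasure_gammaMeasure hn0 (by positivity)
  set C : ℝ := (∑ k ∈ Finset.range 9, |iteratedDeriv k f t| / (k.factorial : ℝ))
    + 2 * M / 40320 with hC
  have hint : Integrable (fun x => C * (1 + (x - t) ^ 8)) (gammaMeasure n ((n:ℝ)/t)) :=
    ((integrable_const (1:ℝ)).add (integrable_gamma_pow_sub hn0 (by positivity) t 8)).const_mul C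
  refine hint.mono' (hf.continuous.aestronglyMeasurable) (ae_of_all _ fun x => ?_)
  have h1 : |T9 f t x| ≤ (∑ k ∈ Finset.range 9, |iteratedDeriv k f t| / (k.factorial : ℝ))
      * (1 + (x - t) ^ 8) := by
    rw [T9]
    calc |∑ k ∈ Finset.range 9, iteratedDeriv k f t * (x - t) ^ k / (k.factorial : ℝ)|
        ≤ ∑ k ∈ Finset.range 9, |iteratedDeriv k f t * (x - t) ^ k / (k.factorial : ℝ)| :=
          Finset.abs_sum_le_sum_abs _ _
      _ ≤ ∑ k ∈ Finset.range 9, |iteratedDeriv k f t| / (k.factorial : ℝ) * (1 + (x-t)^8) := by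
          refine Finset.sum_le_sum fun k hk => ?_
          rw [abs_div, abs_mul, abs_pow]
          rw [show |(k.factorial : ℝ)| = (k.factorial : ℝ) by
            exact abs_of_pos (by exact_mod_cast k.factorial_pos)]
          rw [div_mul_eq_mul_div, div_le_div_iff_of_pos_right (by exact_mod_cast k.factorial_pos)]
          have hb := abs_pow_le (x - t) (show k ≤ 8 by simp at hk; omega)
          have : 0 ≤ |iteratedDeriv k f t| := abs_nonneg _
          nlinarith
      _ = (∑ k ∈ Finset.range 9, |iteratedDeriv k f t| / (k.factorial : ℝ)) * (1 + (x-t)^8) :=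
          (Finset.sum_mul _ _ _).symm
  have h2 : |f x - T9 f t x| ≤ 2 * M / 40320 * (1 + (x - t) ^ 8) := by
    have := rem_global hf hM t x
    have hM0 : 0 ≤ M := le_trans (abs_nonneg _) (hM t)
    nlinarith [pow_nonneg (sq_nonneg (x-t)) 4]
  have h3 : |f x| ≤ |T9 f t x| + |f x - T9 f t x| := by
    have := abs_add_le (T9 f t x) (f x - T9 f t x); simpa using this
  have h4 : (0:ℝ) ≤ 1 + (x-t)^8 := by positivity
  rw [Real.norm_eq_abs]
  calc |f x| ≤ _ + _ := h3
    _ ≤ C * (1 + (x - t) ^ 8) := by rw [hC]; nlinarith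


set_option maxHeartbeats 1000000 in
theorem main (t : ℝ) (ht : 0 < t) (f : ℝ → ℝ)
    (hf : ContDiff ℝ 8 f)
    (hf_bdd : ∃ M : ℝ, ∀ x : ℝ, |iteratedDeriv 8 f x| ≤ M) :
    Tendsto (fun n : ℕ =>
        (n : ℝ) ^ 4 *
          ((∫ x, f x ∂(gammaMeasure n ((n : ℝ) / t))) - f t -
            (t ^ 2 / 2 * iteratedDeriv 2 f t) / n -
            (t ^ 4 / 8 * iteratedDeriv 4 f t + t ^ 3 / 3 * iteratedDeriv 3 f t) / n ^ 2 -
            (t ^ 6 / 48 * iteratedDeriv 6 f t + t ^ 5 / 6 * iteratedDeriv 5 f t +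
              t ^ 4 / 4 * iteratedDeriv 4 f t) / n ^ 3))
      atTop
      (nhds (t ^ 8 / 384 * iteratedDeriv 8 f t + t ^ 7 / 24 * iteratedDeriv 7 f t +
        13 * t ^ 6 / 72 * iteratedDeriv 6 f t + t ^ 5 / 5 * iteratedDeriv 5 f t)) := by
  obtain ⟨M, hM⟩ := hf_bdd
  have hM0 : 0 ≤ M := le_trans (abs_nonneg _) (hM t)
  set R : ℕ → ℝ := fun n => ∫ x, (f x - T9 f t x) ∂(gammaMeasure n ((n:ℝ)/t)) with hR
  set A : ℕ → ℝ := fun n =>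
    t^5/5 * iteratedDeriv 5 f t
    + t^6 * iteratedDeriv 6 f t * (13/72 + ((n:ℝ)⁻¹)/6)
    + t^7 * iteratedDeriv 7 f t * (1/24 + 11/60*(n:ℝ)⁻¹ + 1/7*((n:ℝ)⁻¹)^2)
    + t^8 * iteratedDeriv 8 f t *
        (1/384 + 17/288*(n:ℝ)⁻¹ + 29/160*((n:ℝ)⁻¹)^2 + 1/8*((n:ℝ)⁻¹)^3) with hA
  have hu : Tendsto (fun n : ℕ => ((n:ℝ))⁻¹) atTop (nhds 0) :=
    tendsto_inv_atTop_zero.comp tendsto_natCast_atTop_atTop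
  -- limit of A
  have hAlim : Tendsto A atTop (nhds (t ^ 8 / 384 * iteratedDeriv 8 f t +
      t ^ 7 / 24 * iteratedDeriv 7 f t + 13 * t ^ 6 / 72 * iteratedDeriv 6 f t +
      t ^ 5 / 5 * iteratedDeriv 5 f t)) := by
    have hcont : Continuous (fun u : ℝ =>
        t^5/5 * iteratedDeriv 5 f t
        + t^6 * iteratedDeriv 6 f t * (13/72 + u/6)
        + t^7 * iteratedDeriv 7 f t * (1/24 + 11/60*u + 1/7*u^2)
        + t^8 * iteratedDeriv 8 f t * (1/384 + 17/288*u + 29/160*u^2 + 1/8*u^3)) := by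
      fun_prop
    have h := (hcont.tendsto 0).comp hu
    have hval : (t^5/5 * iteratedDeriv 5 f t
        + t^6 * iteratedDeriv 6 f t * (13/72 + (0:ℝ)/6)
        + t^7 * iteratedDeriv 7 f t * (1/24 + 11/60*(0:ℝ) + 1/7*(0:ℝ)^2)
        + t^8 * iteratedDeriv 8 f t * (1/384 + 17/288*(0:ℝ) + 29/160*(0:ℝ)^2 + 1/8*(0:ℝ)^3))
        = (t ^ 8 / 384 * iteratedDeriv 8 f t + t ^ 7 / 24 * iteratedDeriv 7 f t +
          13 * t ^ 6 / 72 * iteratedDeriv 6 f t + t ^ 5 / 5 * iteratedDeriv 5 f t) := by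
      ring
    rw [Function.comp_def] at h
    rw [hval] at h
    exact h
  -- limit of n^4 * M8
  have h8 : Tendsto (fun n : ℕ => (n:ℝ)^4 * ∫ x, (x - t)^8 ∂(gammaMeasure n ((n:ℝ)/t))) atTop
      (nhds (105 * t^8)) := by
    have hcont : Continuous (fun u : ℝ =>
        t^8 * (105 + 2380*u + 7308*u^2 + 5040*u^3)) := by fun_prop
    have h := (hcont.tendsto 0).comp hu
    rw [Function.comp_def] at h
    have hval : t^8 * (105 + 2380*(0:ℝ) + 7308*(0:ℝ)^2 + 5040*(0:ℝ)^3) = 105 * t^8 := by ring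
    rw [hval] at h
    apply h.congr'
    filter_upwards [eventually_ge_atTop 1] with n hn
    have hn0 : (0:ℝ) < n := by exact_mod_cast hn
    rw [M8_closed hn ht]
    field_simp
  -- limit of n^4 * M10
  have h10 : Tendsto (fun n : ℕ => (n:ℝ)^4 * ∫ x, (x - t)^10 ∂(gammaMeasure n ((n:ℝ)/t))) atTop (nhds 0) := by
    have hcont : Continuous (fun u : ℝ =>
        t^10 * (945*u + 44100*u^2 + 303660*u^3 + 623376*u^4 + 362880*u^5)) := by fun_prop
    have h := (hcont.tendsto 0).comp hu
    rw [Function.comp_def] at h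
    have hval : t^10 * (945*(0:ℝ) + 44100*(0:ℝ)^2 + 303660*(0:ℝ)^3 + 623376*(0:ℝ)^4
        + 362880*(0:ℝ)^5) = 0 := by ring
    rw [hval] at h
    apply h.congr'
    filter_upwards [eventually_ge_atTop 1] with n hn
    have hn0 : (0:ℝ) < n := by exact_mod_cast hn
    rw [M10_closed hn ht]
    field_simp
  -- limit of n^4 * R n
  have hRlim : Tendsto (fun n : ℕ => (n:ℝ)^4 * R n) atTop (nhds 0) := by
    rw [NormedAddCommGroup.tendsto_nhds_zero]
    intro ε hε
    have ht8 : (0:ℝ) < 105*t^8 + 1 := by positivity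
    set ε₁ : ℝ := ε/(2*(105*t^8+1)) with hε₁def
    have hε₁ : 0 < ε₁ := by positivity
    obtain ⟨δ, hδ0, hloc⟩ := rem_local hf t hε₁
    set c : ℝ := (2*M/40320)/δ^2 with hcdef
    have hc0 : 0 ≤ c := by positivity
    have hpt : ∀ x, |f x - T9 f t x| ≤ ε₁*(x-t)^8 + c*(x-t)^10 := by
      intro x
      rcases le_or_gt (|x - t|) δ with h | h
      · have := hloc x h
        have h10 : (0:ℝ) ≤ c*(x-t)^10 := by positivity
        linarith
      · have hg := rem_global hf hM t x
        have hsq : δ^2 ≤ (x-t)^2 := by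
          have : δ ≤ |x - t| := h.le
          nlinarith [abs_nonneg (x-t), sq_abs (x-t)]
        have hkey : (2*M/40320)*(x-t)^8 ≤ c*(x-t)^10 := by
          have hδ2 : (0:ℝ) < δ^2 := by positivity
          have h8nn : (0:ℝ) ≤ (x-t)^8 := by positivity
          have hMn : (0:ℝ) ≤ 2*M/40320 := by positivity
          have key2 : (2*M/40320*(x-t)^8) * δ^2 ≤ (2*M/40320) * (x-t)^10 := by
            nlinarith [mul_le_mul_of_nonneg_left hsq (mul_nonneg hMn h8nn)]
          calc 2*M/40320*(x-t)^8 = (2*M/40320*(x-t)^8)*δ^2/δ^2 := by field_simp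
            _ ≤ (2*M/40320)*(x-t)^10/δ^2 := by
                gcongr
            _ = c*(x-t)^10 := by rw [hcdef]; ring
        have h8p : (0:ℝ) ≤ ε₁*(x-t)^8 := by positivity
        linarith
    have hev1 : ∀ n : ℕ, 1 ≤ n → |(n:ℝ)^4 * R n| ≤
        ε₁*((n:ℝ)^4 * ∫ x, (x - t)^8 ∂(gammaMeasure n ((n:ℝ)/t))) + c*((n:ℝ)^4 * ∫ x, (x - t)^10 ∂(gammaMeasure n ((n:ℝ)/t))) := by
      intro n hn
      have hn0 : (0:ℝ) < n := by exact_mod_cast hn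
      have hfi : Integrable f (gammaMeasure n ((n:ℝ)/t)) := integrable_f hn ht hf hM
      have hT9i : Integrable (T9 f t) (gammaMeasure n ((n:ℝ)/t)) := integrable_T9 hn ht f
      have hremi : Integrable (fun x => f x - T9 f t x) (gammaMeasure n ((n:ℝ)/t)) := hfi.sub hT9i
      have hi8 : Integrable (fun x => (x - t)^8) (gammaMeasure n ((n:ℝ)/t)) :=
        integrable_gamma_pow_sub hn0 (by positivity) t 8
      have hi10 : Integrable (fun x => (x - t)^10) (gammaMeasure n ((n:ℝ)/t)) :=
        integrable_gamma_pow_sub hn0 (by positivity) t 10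
      have h1 : |R n| ≤ ε₁*(∫ x, (x - t)^8 ∂(gammaMeasure n ((n:ℝ)/t))) + c*(∫ x, (x - t)^10 ∂(gammaMeasure n ((n:ℝ)/t))) := by
        have hb : Integrable (fun x => ε₁*(x-t)^8 + c*(x-t)^10) (gammaMeasure n ((n:ℝ)/t)) :=
          (hi8.const_mul ε₁).add (hi10.const_mul c)
        calc |R n| ≤ ∫ x, |f x - T9 f t x| ∂(gammaMeasure n ((n:ℝ)/t)) := by
              rw [hR]
              simpa [Real.norm_eq_abs] using
                MeasureTheory.norm_integral_le_integral_norm (μ := gammaMeasure n ((n:ℝ)/t))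
                  (fun x => f x - T9 f t x)
          _ ≤ ∫ x, (ε₁*(x-t)^8 + c*(x-t)^10) ∂(gammaMeasure n ((n:ℝ)/t)) :=
              integral_mono hremi.abs hb hpt
          _ = ε₁*(∫ x, (x - t)^8 ∂(gammaMeasure n ((n:ℝ)/t))) + c*(∫ x, (x - t)^10 ∂(gammaMeasure n ((n:ℝ)/t))) := by
              rw [integral_add (hi8.const_mul ε₁) (hi10.const_mul c),
                MeasureTheory.integral_const_mul, MeasureTheory.integral_const_mul]
      have hn4 : (0:ℝ) ≤ (n:ℝ)^4 := by positivity
      calc |(n:ℝ)^4 * R n| = (n:ℝ)^4 * |R n| := by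
            rw [abs_mul, abs_of_nonneg hn4]
        _ ≤ (n:ℝ)^4 * (ε₁*(∫ x, (x - t)^8 ∂(gammaMeasure n ((n:ℝ)/t))) + c*(∫ x, (x - t)^10 ∂(gammaMeasure n ((n:ℝ)/t)))) :=
            mul_le_mul_of_nonneg_left h1 hn4
        _ = ε₁*((n:ℝ)^4 * ∫ x, (x - t)^8 ∂(gammaMeasure n ((n:ℝ)/t))) + c*((n:ℝ)^4 * ∫ x, (x - t)^10 ∂(gammaMeasure n ((n:ℝ)/t))) := by
            ring
    have e8 : ∀ᶠ n : ℕ in atTop, (n:ℝ)^4 * ∫ x, (x - t)^8 ∂(gammaMeasure n ((n:ℝ)/t)) ≤ 105*t^8 + 1 :=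
      h8.eventually (eventually_le_nhds (by linarith))
    have e10 : ∀ᶠ n : ℕ in atTop, c * ((n:ℝ)^4 * ∫ x, (x - t)^10 ∂(gammaMeasure n ((n:ℝ)/t))) < ε/2 := by
      have hct : Tendsto (fun n : ℕ => c * ((n:ℝ)^4 * ∫ x, (x - t)^10 ∂(gammaMeasure n ((n:ℝ)/t)))) atTop
          (nhds (c * 0)) := h10.const_mul c
      rw [mul_zero] at hct
      exact hct.eventually (eventually_lt_nhds (by positivity))
    filter_upwards [e8, e10, eventually_ge_atTop 1] with n h8n h10n hn1
    rw [Real.norm_eq_abs]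
    have hε₁val : ε₁ * (105*t^8+1) = ε/2 := by
      rw [hε₁def]; field_simp
    calc |(n:ℝ)^4 * R n| ≤ ε₁*((n:ℝ)^4 * ∫ x, (x - t)^8 ∂(gammaMeasure n ((n:ℝ)/t)))
          + c*((n:ℝ)^4 * ∫ x, (x - t)^10 ∂(gammaMeasure n ((n:ℝ)/t))) := hev1 n hn1
      _ ≤ ε₁*(105*t^8+1) + c*((n:ℝ)^4 * ∫ x, (x - t)^10 ∂(gammaMeasure n ((n:ℝ)/t))) := by
          have := mul_le_mul_of_nonneg_left h8n hε₁.le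
          linarith
      _ < ε/2 + ε/2 := by rw [hε₁val] at *; linarith
      _ = ε := by ring
  -- key identity
  have hkey : ∀ n : ℕ, 1 ≤ n →
      (n : ℝ) ^ 4 *
          ((∫ x, f x ∂(gammaMeasure n ((n : ℝ) / t))) - f t -
            (t ^ 2 / 2 * iteratedDeriv 2 f t) / n -
            (t ^ 4 / 8 * iteratedDeriv 4 f t + t ^ 3 / 3 * iteratedDeriv 3 f t) / n ^ 2 -
            (t ^ 6 / 48 * iteratedDeriv 6 f t + t ^ 5 / 6 * iteratedDeriv 5 f t +
              t ^ 4 / 4 * iteratedDeriv 4 f t) / n ^ 3)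
        = A n + (n:ℝ)^4 * R n := by
    intro n hn
    have hn0 : (0:ℝ) < n := by exact_mod_cast hn
    have hfi : Integrable f (gammaMeasure n ((n:ℝ)/t)) := integrable_f hn ht hf hM
    have hT9i : Integrable (T9 f t) (gammaMeasure n ((n:ℝ)/t)) := integrable_T9 hn ht f
    have hsplit : ∫ x, f x ∂(gammaMeasure n ((n:ℝ)/t)) = (∫ x, T9 f t x ∂(gammaMeasure n ((n:ℝ)/t))) + R n := by
      rw [hR]
      calc ∫ x, f x ∂(gammaMeasure n ((n:ℝ)/t)) = ∫ x, (T9 f t x + (f x - T9 f t x)) ∂(gammaMeasure n ((n:ℝ)/t)) := by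
            congr 1; funext x; ring
        _ = _ := integral_add hT9i (hfi.sub hT9i)
    rw [hsplit, integral_T9 hn ht f]
    simp only [Finset.sum_range_succ, Finset.sum_range_zero]
    rw [M0_closed hn ht, M1_closed hn ht, M2_closed hn ht, M3_closed hn ht,
      M4_closed hn ht, M5_closed hn ht, M6_closed hn ht, M7_closed hn ht, M8_closed hn ht]
    simp only [iteratedDeriv_zero]
    rw [hA]
    norm_num [Nat.factorial]
    field_simp
    ring
  -- conclusion
  have hsum : Tendsto (fun n : ℕ => A n + (n:ℝ)^4 * R n) atTop
      (nhds ((t ^ 8 / 384 * iteratedDeriv 8 f t + t ^ 7 / 24 * iteratedDeriv 7 f t +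
        13 * t ^ 6 / 72 * iteratedDeriv 6 f t + t ^ 5 / 5 * iteratedDeriv 5 f t) + 0)) :=
    hAlim.add hRlim
  rw [add_zero] at hsum
  apply hsum.congr'
  filter_upwards [eventually_ge_atTop 1] with n hn
  exact (hkey n hn).symm

end Assembly
end GammaFourth


/-- Fourth-order randomisation error: for `t > 0` and `f` of class `C⁸` with bounded eighth
derivative, with `b₁(t) = (t²/2) f''(t)`, `b₂(t) = (t⁴/8) f⁽⁴⁾(t) + (t³/3) f⁽³⁾(t)` and
`b₃(t) = (t⁶/48) f⁽⁶⁾(t) + (t⁵/6) f⁽⁵⁾(t) + (t⁴/4) f⁽⁴⁾(t)`,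
`n⁴ (∫ f dΓ(n,n/t) - f(t) - b₁(t)/n - b₂(t)/n² - b₃(t)/n³) →
  (t⁸/384) f⁽⁸⁾(t) + (t⁷/24) f⁽⁷⁾(t) + ((13 t⁶)/72) f⁽⁶⁾(t) + (t⁵/5) f⁽⁵⁾(t)`. -/
theorem gamma_randomisation_fourth_order (t : ℝ) (ht : 0 < t) (f : ℝ → ℝ)
    (hf : ContDiff ℝ 8 f)
    (hf_bdd : ∃ M : ℝ, ∀ x : ℝ, |iteratedDeriv 8 f x| ≤ M) :
    Tendsto (fun n : ℕ =>
        (n : ℝ) ^ 4 *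
          ((∫ x, f x ∂(gammaMeasure n ((n : ℝ) / t))) - f t -
            (t ^ 2 / 2 * iteratedDeriv 2 f t) / n -
            (t ^ 4 / 8 * iteratedDeriv 4 f t + t ^ 3 / 3 * iteratedDeriv 3 f t) / n ^ 2 -
            (t ^ 6 / 48 * iteratedDeriv 6 f t + t ^ 5 / 6 * iteratedDeriv 5 f t +
              t ^ 4 / 4 * iteratedDeriv 4 f t) / n ^ 3))
      atTop
      (nhds (t ^ 8 / 384 * iteratedDeriv 8 f t + t ^ 7 / 24 * iteratedDeriv 7 f t +
        13 * t ^ 6 / 72 * iteratedDeriv 6 f t + t ^ 5 / 5 * iteratedDeriv 5 f t)) :=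
  GammaFourth.main t ht f hf hf_bdd
end

section
/- Let k be a non-negative integer, let t > 0, let M ≥ 0, and let f : ℝ → ℝ be (2k+2)-times differentiable with |f⁽²ᵏ⁺²⁾(x)| ≤ M for all x. For a positive integer n let a_{m,n} = ∫ (x − t)^m dΓ(n, n/t)(x) denote the m-th central moment of the Gamma distribution with shape n and rate n/t. Then | ∫ f(x) dΓ(n, n/t)(x) − f(t) − Σ_{m=2}^{2k+1} (a_{m,n}/m!) f⁽ᵐ⁾(t) | ≤ (M/(2k+2)!) · a_{2k+2,n}. -/
open MeasureTheory ProbabilityTheory Real Set intervalIntegral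
open scoped Interval

/-- If `φ t = 0` and `|φ'| ≤ C |y - t|^p` everywhere, then `|φ x| ≤ C |x-t|^(p+1)/(p+1)`. -/
lemma step_bound (φ : ℝ → ℝ) (t C : ℝ) (p : ℕ) (hφ : Differentiable ℝ φ)
    (h0 : φ t = 0) (hbd : ∀ y, |deriv φ y| ≤ C * |y - t| ^ p) (x : ℝ) :
    |φ x| ≤ C * |x - t| ^ (p + 1) / (p + 1) := by
  have hgcont : Continuous fun y : ℝ => C * |y - t| ^ p := by fun_prop
  have hii : IntervalIntegrable (deriv φ) volume t x := by
    refine (hgcont.intervalIntegrable t x).mono_fun' ?_ ?_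
    · exact (measurable_deriv φ).aestronglyMeasurable.restrict
    · exact Filter.Eventually.of_forall fun y => hbd y
  have hftc : ∫ y in t..x, deriv φ y = φ x - φ t :=
    integral_deriv_eq_sub (fun y _ => hφ y) hii
  have h1 : |φ x| = ‖∫ y in t..x, deriv φ y‖ := by
    rw [hftc, h0, sub_zero, Real.norm_eq_abs]
  rw [h1]
  calc ‖∫ y in t..x, deriv φ y‖ ≤ ∫ y in Ι t x, ‖deriv φ y‖ :=
        norm_integral_le_integral_norm_uIoc
    _ ≤ ∫ y in Ι t x, C * |y - t| ^ p := by
        refine setIntegral_mono_on ?_ ?_ measurableSet_uIoc fun y _ => hbd y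
        · exact (intervalIntegrable_iff.mp hii).norm
        · exact hgcont.integrableOn_uIoc
    _ = C * ∫ y in Ι t x, |y - t| ^ p := MeasureTheory.integral_const_mul _ _
    _ = C * (|x - t| ^ (p + 1) / (p + 1)) := by rw [integral_pow_abs_sub_uIoc]
    _ = C * |x - t| ^ (p + 1) / (p + 1) := by ring

/-- Two-sided pointwise Taylor estimate with Lagrange-type remainder bound. -/
lemma taylor_abs_bound (N : ℕ) : ∀ (g : ℝ → ℝ) (t M : ℝ),
    (∀ m, m ≤ N → Differentiable ℝ (iteratedDeriv m g)) →
    (∀ x, |iteratedDeriv (N + 1) g x| ≤ M) →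
    ∀ x, |g x - ∑ m ∈ Finset.range (N + 1),
        iteratedDeriv m g t / m.factorial * (x - t) ^ m|
      ≤ M * |x - t| ^ (N + 1) / (N + 1).factorial := by
  induction N with
  | zero =>
    intro g t M hg hM x
    have hgd : Differentiable ℝ g := by
      have := hg 0 le_rfl; rwa [iteratedDeriv_zero] at this
    have h := step_bound (fun y => g y - g t) t M 0 (hgd.sub_const _) (sub_self _) ?_ x
    · simpa [Finset.sum_range_one, iteratedDeriv_zero] using h
    · intro y
      have : deriv (fun y => g y - g t) y = deriv g y := by
        simp [deriv_sub_const]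
      rw [this, pow_zero, mul_one]
      have := hM y
      rwa [iteratedDeriv_one] at this
  | succ N ih =>
    intro g t M hg hM x
    have hgd : Differentiable ℝ g := by
      have := hg 0 (Nat.zero_le _); rwa [iteratedDeriv_zero] at this
    set c : ℕ → ℝ := fun m => iteratedDeriv m g t / m.factorial with hc
    set φ : ℝ → ℝ := fun y => g y - ∑ m ∈ Finset.range (N + 2), c m * (y - t) ^ m with hφdef
    have hφt : φ t = 0 := by
      have : ∑ m ∈ Finset.range (N + 2), c m * (t - t) ^ m = c 0 := by
        rw [Finset.sum_eq_single 0]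
        · simp
        · intro m _ hm; simp [zero_pow hm]
        · simp
      simp only [hφdef, this, hc]
      simp [Finset.sum_range_succ', iteratedDeriv_zero]
    have hpoly : ∀ y : ℝ, HasDerivAt (fun y => ∑ m ∈ Finset.range (N + 2), c m * (y - t) ^ m)
        (∑ m ∈ Finset.range (N + 2), c m * (m * (y - t) ^ (m - 1) * 1)) y := by
      intro y
      refine HasDerivAt.fun_sum fun m _ => ?_
      exact (((hasDerivAt_id y).sub_const t).pow m).const_mul (c m)
    have hφdiff : Differentiable ℝ φ := fun y =>
      (hgd y).sub (hpoly y).differentiableAt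
    have hderiv : ∀ y, deriv φ y = deriv g y - ∑ j ∈ Finset.range (N + 1),
        iteratedDeriv j (deriv g) t / j.factorial * (y - t) ^ j := by
      intro y
      have h1 : deriv φ y = deriv g y -
          ∑ m ∈ Finset.range (N + 2), c m * (m * (y - t) ^ (m - 1) * 1) :=
        (((hgd y).hasDerivAt).sub (hpoly y)).deriv
      rw [h1]
      congr 1
      rw [Finset.sum_range_succ']
      simp only [Nat.cast_zero, zero_mul, mul_zero, add_zero, mul_one, Nat.add_sub_cancel]
      refine Finset.sum_congr rfl fun j _ => ?_
      show iteratedDeriv (j + 1) g t / (j + 1).factorial * (((j : ℕ) + 1 : ℕ) * (y - t) ^ j)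
        = iteratedDeriv j (deriv g) t / j.factorial * (y - t) ^ j
      rw [← iteratedDeriv_succ', Nat.factorial_succ]
      have hj : ((j : ℝ) + 1) ≠ 0 := by positivity
      have hj2 : ((j.factorial : ℝ)) ≠ 0 := by
        exact_mod_cast j.factorial_ne_zero
      push_cast
      field_simp
    have hbd' : ∀ y, |deriv φ y| ≤ M / (N + 1).factorial * |y - t| ^ (N + 1) := by
      intro y
      rw [hderiv y]
      have ihy := ih (deriv g) t M (fun m hm => by
          have := hg (m + 1) (by omega)
          rwa [iteratedDeriv_succ'] at this)
        (fun z => by have := hM z; rwa [iteratedDeriv_succ'] at this) y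
      calc |deriv g y - _| ≤ M * |y - t| ^ (N + 1) / (N + 1).factorial := ihy
        _ = M / (N + 1).factorial * |y - t| ^ (N + 1) := by ring
    have hfin := step_bound φ t (M / (N + 1).factorial) (N + 1) hφdiff hφt hbd' x
    have : φ x = g x - ∑ m ∈ Finset.range (N + 2),
        iteratedDeriv m g t / m.factorial * (x - t) ^ m := rfl
    rw [← this]
    have hfac : (((N + 2).factorial : ℕ) : ℝ) = ((N:ℝ) + 2) * (N + 1).factorial := by
      rw [Nat.factorial_succ]; push_cast; ring
    have hne : (((N + 1).factorial : ℕ) : ℝ) ≠ 0 := by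
      exact_mod_cast (N + 1).factorial_ne_zero
    have hne2 : ((N:ℝ) + 2) ≠ 0 := by positivity
    calc |φ x| ≤ M / (N + 1).factorial * |x - t| ^ (N + 1 + 1) / ((N:ℝ) + 1 + 1) := by
          exact_mod_cast hfin
      _ = M * |x - t| ^ (N + 2) / (N + 2).factorial := by
          rw [hfac]
          field_simp
          ring

lemma intOn_pow_exp {s r : ℝ} (hs : -1 < s) (hr : 0 < r) :
    IntegrableOn (fun x : ℝ => x ^ s * Real.exp (-(r * x))) (Ioi 0) := by
  have h := integrableOn_rpow_mul_exp_neg_mul_rpow hs zero_lt_one hr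
  simpa [Real.rpow_one, neg_mul] using h

lemma gamma_integral_eq (a r : ℝ) (ha : 0 < a) (hr : 0 < r) (g : ℝ → ℝ) :
    ∫ x, g x ∂gammaMeasure a r = ∫ x, gammaPDFReal a r x * g x := by
  rw [gammaMeasure]
  have h : gammaPDF a r = fun x => ((gammaPDFReal a r x).toNNReal : ENNReal) := rfl
  rw [h, integral_withDensity_eq_integral_smul (measurable_gammaPDFReal a r).real_toNNReal g]
  refine integral_congr_ae (Filter.Eventually.of_forall fun x => ?_)
  simp [NNReal.smul_def, Real.coe_toNNReal _ (gammaPDFReal_nonneg ha hr x)]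

lemma gamma_integrable_iff (a r : ℝ) (ha : 0 < a) (hr : 0 < r) (g : ℝ → ℝ) :
    Integrable g (gammaMeasure a r) ↔
      Integrable (fun x => gammaPDFReal a r x * g x) volume := by
  rw [gammaMeasure]
  have h : gammaPDF a r = fun x => ((gammaPDFReal a r x).toNNReal : ENNReal) := rfl
  rw [h]
  constructor
  · intro hi
    have h2 := (integrable_withDensity_iff_integrable_smul
      (μ := volume) (g := g) (measurable_gammaPDFReal a r).real_toNNReal).mp hi
    exact h2.congr (Filter.Eventually.of_forall fun x => by
      simp [NNReal.smul_def, Real.coe_toNNReal _ (gammaPDFReal_nonneg ha hr x)])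
  · intro hi
    refine (integrable_withDensity_iff_integrable_smul
      (μ := volume) (g := g) (measurable_gammaPDFReal a r).real_toNNReal).mpr ?_
    exact hi.congr (Filter.Eventually.of_forall fun x => by
      simp [NNReal.smul_def, Real.coe_toNNReal _ (gammaPDFReal_nonneg ha hr x)])

lemma gamma_moment (a r : ℝ) (ha : 0 < a) (hr : 0 < r) (j : ℕ) :
    Integrable (fun x : ℝ => x ^ j) (gammaMeasure a r) ∧
      ∫ x, x ^ j ∂gammaMeasure a r = Real.Gamma (a + j) / (Real.Gamma a * r ^ j) := by
  set F : ℝ → ℝ := fun x => gammaPDFReal a r x * x ^ j with hF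
  have key : ∀ x ∈ Ioi (0:ℝ),
      F x = r ^ a / Real.Gamma a * (x ^ (a + j - 1) * Real.exp (-(r * x))) := by
    intro x hx
    have hx' : (0:ℝ) < x := hx
    have h1 : (x:ℝ) ^ j = x ^ ((j:ℕ):ℝ) := (Real.rpow_natCast x j).symm
    rw [hF]
    simp only [gammaPDFReal, if_pos hx'.le]
    rw [show a + (j:ℝ) - 1 = (a - 1) + (j:ℝ) by ring, Real.rpow_add hx', ← h1]
    ring
  have h0 : ∀ᵐ x : ℝ ∂volume, x ≠ 0 := by
    rw [ae_iff]
    simp only [ne_eq, not_not]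
    simpa using Real.volume_singleton
  have hae : F =ᵐ[volume] (Ioi (0:ℝ)).indicator F := by
    filter_upwards [h0] with x hx
    by_cases hmem : x ∈ Ioi (0:ℝ)
    · rw [indicator_of_mem hmem]
    · rw [indicator_of_notMem hmem]
      have hneg : x < 0 := lt_of_le_of_ne (not_lt.mp hmem) hx
      simp [hF, gammaPDFReal, not_le.mpr hneg]
  have hs : -1 < a + j - 1 := by
    have : (0:ℝ) ≤ j := Nat.cast_nonneg j
    linarith
  have hinton : IntegrableOn F (Ioi 0) volume := by
    exact IntegrableOn.congr_fun ((intOn_pow_exp hs hr).const_mul (r ^ a / Real.Gamma a))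
      (fun x hx => (key x hx).symm) measurableSet_Ioi
  have hint : Integrable F volume :=
    ((hinton.integrable_indicator measurableSet_Ioi).congr hae.symm)
  have hval : ∫ x, F x = Real.Gamma (a + j) / (Real.Gamma a * r ^ j) := by
    rw [integral_congr_ae hae, MeasureTheory.integral_indicator measurableSet_Ioi,
      setIntegral_congr_fun measurableSet_Ioi key, MeasureTheory.integral_const_mul]
    rw [show a + (j:ℝ) - 1 = (a + j) - 1 by ring,
      integral_rpow_mul_exp_neg_mul_Ioi (by positivity) hr]
    have h2 : (1 / r : ℝ) ^ (a + (j:ℝ)) = (r ^ a)⁻¹ * (r ^ j : ℝ)⁻¹ := by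
      rw [one_div, ← Real.rpow_natCast r j, Real.inv_rpow hr.le, ← mul_inv,
        ← Real.rpow_add hr]
    rw [h2]
    have hra : (r:ℝ) ^ a ≠ 0 := (Real.rpow_pos_of_pos hr a).ne'
    have hrj : (r:ℝ) ^ j ≠ 0 := (pow_pos hr j).ne'
    have hGa : Real.Gamma a ≠ 0 := (Real.Gamma_pos_of_pos ha).ne'
    field_simp
  exact ⟨(gamma_integrable_iff a r ha hr _).mpr hint,
    by rw [gamma_integral_eq a r ha hr]; exact hval⟩

/-- Taylor-type bound for the randomisation error: if `f` is `(2k+2)`-times differentiable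
with `|f⁽²ᵏ⁺²⁾| ≤ M` everywhere, then, writing `a_{m,n}` for the `m`-th central moment of
the Gamma distribution with shape `n` and rate `n / t`,
`|∫ f dΓ(n,n/t) - f(t) - ∑_{m=2}^{2k+1} (a_{m,n}/m!) f⁽ᵐ⁾(t)| ≤ (M/(2k+2)!) a_{2k+2,n}`. -/
theorem gamma_randomisation_taylor_bound (k : ℕ) (t M : ℝ) (ht : 0 < t) (f : ℝ → ℝ)
    (hf : ∀ m : ℕ, m < 2 * k + 2 → Differentiable ℝ (iteratedDeriv m f))
    (hf_bdd : ∀ x : ℝ, |iteratedDeriv (2 * k + 2) f x| ≤ M)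
    (n : ℕ) (hn : 0 < n) :
    |(∫ x, f x ∂(gammaMeasure n ((n : ℝ) / t))) - f t -
        ∑ m ∈ Finset.Icc 2 (2 * k + 1),
          (∫ x, (x - t) ^ m ∂(gammaMeasure n ((n : ℝ) / t))) / m.factorial *
            iteratedDeriv m f t| ≤
      M / (2 * k + 2).factorial *
        ∫ x, (x - t) ^ (2 * k + 2) ∂(gammaMeasure n ((n : ℝ) / t)) := by
  have ha : (0:ℝ) < (n:ℝ) := by exact_mod_cast hn
  have hr : (0:ℝ) < (n:ℝ) / t := div_pos ha ht
  set μ := gammaMeasure (n:ℝ) ((n:ℝ) / t) with hμ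
  haveI : IsProbabilityMeasure μ := isProbabilityMeasure_gammaMeasure ha hr
  have hint_pow : ∀ j : ℕ, Integrable (fun x : ℝ => x ^ j) μ := fun j =>
    (gamma_moment _ _ ha hr j).1
  have hint_cpow : ∀ m : ℕ, Integrable (fun x : ℝ => (x - t) ^ m) μ := by
    intro m
    have hrepr : (fun x : ℝ => (x - t) ^ m)
        = fun x : ℝ => ∑ i ∈ Finset.range (m + 1),
            x ^ i * (-t) ^ (m - i) * (m.choose i) := by
      funext x; rw [sub_eq_add_neg, add_pow]
    rw [hrepr]
    exact integrable_finset_sum _ fun i _ => ((hint_pow i).mul_const _).mul_const _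
  have hmean : ∫ x, x ∂μ = t := by
    have h1 := (gamma_moment ((n:ℝ)) ((n:ℝ)/t) ha hr 1).2
    simp only [pow_one, Nat.cast_one] at h1
    rw [Real.Gamma_add_one ha.ne'] at h1
    have hGa : Real.Gamma (n:ℝ) ≠ 0 := (Real.Gamma_pos_of_pos ha).ne'
    have ht' : t ≠ 0 := ht.ne'
    have hn' : (n:ℝ) ≠ 0 := ha.ne'
    rw [h1]
    field_simp
  have hcent1 : ∫ x, (x - t) ∂μ = 0 := by
    have h1 : Integrable (fun x : ℝ => x) μ := by simpa [pow_one] using hint_pow 1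
    rw [integral_sub h1 (integrable_const t), hmean, MeasureTheory.integral_const,
      probReal_univ, one_smul, sub_self]
  -- Taylor bound
  have heven : Even (2 * k + 2) := ⟨k + 1, by ring⟩
  have htay := taylor_abs_bound (2 * k + 1) f t M
    (fun m hm => hf m (by omega))
    (fun x => hf_bdd x)
  set P : ℝ → ℝ := fun x => ∑ m ∈ Finset.range (2 * k + 2),
    iteratedDeriv m f t / m.factorial * (x - t) ^ m with hP
  have htay' : ∀ x, |f x - P x| ≤ M / (2 * k + 2).factorial * (x - t) ^ (2 * k + 2) := by
    intro x
    have h := htay x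
    have h2 : (2 * k + 1 + 1) = 2 * k + 2 := by omega
    rw [h2] at h
    calc |f x - P x| ≤ M * |x - t| ^ (2 * k + 2) / (2 * k + 2).factorial := h
      _ = M / (2 * k + 2).factorial * (x - t) ^ (2 * k + 2) := by
          rw [heven.pow_abs]; ring
  have hP_int : Integrable P μ :=
    integrable_finset_sum _ fun m _ => (hint_cpow m).const_mul _
  have hf_meas : AEStronglyMeasurable f μ := by
    have hd : Differentiable ℝ f := by
      have := hf 0 (by omega); rwa [iteratedDeriv_zero] at this
    exact hd.continuous.aestronglyMeasurable
  have hf_int : Integrable f μ := by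
    refine Integrable.mono'
      (hP_int.abs.add ((hint_cpow (2 * k + 2)).const_mul (M / (2 * k + 2).factorial)))
      hf_meas (Filter.Eventually.of_forall fun x => ?_)
    have h1 := htay' x
    calc ‖f x‖ = |P x + (f x - P x)| := by rw [Real.norm_eq_abs]; ring_nf
      _ ≤ |P x| + |f x - P x| := abs_add_le _ _
      _ ≤ |P x| + M / (2 * k + 2).factorial * (x - t) ^ (2 * k + 2) := by linarith
  set G : ℕ → ℝ := fun m => iteratedDeriv m f t / m.factorial * ∫ x, (x - t) ^ m ∂μ
    with hG
  have hPval : ∫ x, P x ∂μ = ∑ m ∈ Finset.range (2 * k + 2), G m := by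
    simp only [hP]
    rw [integral_finset_sum _ fun m _ => (hint_cpow m).const_mul _]
    refine Finset.sum_congr rfl fun m _ => ?_
    simp only [hG]
    exact MeasureTheory.integral_const_mul _ _
  have hG0 : G 0 = f t := by
    simp only [hG, iteratedDeriv_zero, Nat.factorial_zero, Nat.cast_one, div_one, pow_zero]
    rw [MeasureTheory.integral_const, probReal_univ, one_smul, mul_one]
  have hG1 : G 1 = 0 := by
    simp only [hG, pow_one, hcent1, mul_zero]
  have h3 : ∑ m ∈ Finset.Icc 2 (2 * k + 1),
        (∫ x, (x - t) ^ m ∂μ) / m.factorial * iteratedDeriv m f t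
      = ∑ i ∈ Finset.range (2 * k), G (i + 1 + 1) := by
    rw [← Finset.Ico_add_one_right_eq_Icc, Finset.sum_Ico_eq_sum_range]
    have e : 2 * k + 1 + 1 - 2 = 2 * k := by omega
    rw [e]
    refine Finset.sum_congr rfl fun i _ => ?_
    have e2 : 2 + i = i + 1 + 1 := by omega
    rw [e2]
    simp only [hG]
    ring
  have e1 : ∑ m ∈ Finset.range (2 * k + 2), G m
      = (∑ i ∈ Finset.range (2 * k), G (i + 1 + 1) + G (0 + 1)) + G 0 := by
    rw [← Finset.sum_range_succ' (fun i => G (i + 1)) (2 * k)]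
    exact Finset.sum_range_succ' G (2 * k + 1)
  have hsum : ∑ m ∈ Finset.range (2 * k + 2), G m
      = f t + ∑ m ∈ Finset.Icc 2 (2 * k + 1),
          (∫ x, (x - t) ^ m ∂μ) / m.factorial * iteratedDeriv m f t := by
    rw [e1, show G (0 + 1) = 0 from hG1, hG0, add_zero, h3]
    ring
  have hkey : (∫ x, f x ∂μ) - f t - (∑ m ∈ Finset.Icc 2 (2 * k + 1),
        (∫ x, (x - t) ^ m ∂μ) / m.factorial * iteratedDeriv m f t)
      = ∫ x, (f x - P x) ∂μ := by
    rw [integral_sub hf_int hP_int, hPval, hsum]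
    ring
  rw [hkey]
  calc |∫ x, (f x - P x) ∂μ| ≤ ∫ x, |f x - P x| ∂μ := by
        simpa [Real.norm_eq_abs] using
          norm_integral_le_integral_norm (μ := μ) (fun x => f x - P x)
    _ ≤ ∫ x, M / (2 * k + 2).factorial * (x - t) ^ (2 * k + 2) ∂μ :=
        integral_mono (hf_int.sub hP_int).abs ((hint_cpow _).const_mul _)
          (fun x => htay' x)
    _ = M / (2 * k + 2).factorial * ∫ x, (x - t) ^ (2 * k + 2) ∂μ :=
        MeasureTheory.integral_const_mul _ _
end
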